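/- Let T>0, λ₁>0, x₀∈ℝ, and let w:ℝ→ℝ be C¹ with w' bounded on ℝ. Set F(t)=2·(ξ·λ₁·e^{−rt}+η·e^{−ρt}) (with ξ,η,r,ρ>0) and K(t,τ)=∫₀^{min(t,τ)} ds/F(s). Then there exists a continuous function x:[0,T]→ℝ satisfying the integral equation x(t) = x₀ + ∫₀ᵀ K(t,τ)·λ₁·e^{−rτ}·w'(x(τ)) dτ for all t∈[0,T]; equivalently, the boundary value problem (d/dt)(F(t)·ẋ(t)) + w'(x(t))·λ₁·e^{−rt} = 0, x(0)=x₀, ẋ(T)=0 has a solution. -/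

import Mathlib

/-- `F(t) = 2 (ξ λ₁ e^{-rt} + η e^{-ρt})`. -/
noncomputable def Ffun (ξ lam1 η r ρ : ℝ) (t : ℝ) : ℝ :=
  2 * (ξ * lam1 * Real.exp (-(r * t)) + η * Real.exp (-(ρ * t)))

/-- The Green-function kernel `K(t,τ) = ∫₀^{min(t,τ)} ds / F(s)`. -/
noncomputable def Kker (ξ lam1 η r ρ : ℝ) (t τ : ℝ) : ℝ :=
  ∫ s in (0:ℝ)..min t τ, 1 / Ffun ξ lam1 η r ρ s

open MeasureTheory intervalIntegral Set Function Filter Topology BoundedContinuousFunction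

namespace BVPaux

noncomputable def clamp (T t : ℝ) : ℝ := max 0 (min t T)

lemma clamp_mem {T : ℝ} (hT : 0 ≤ T) (t : ℝ) : clamp T t ∈ Icc (0:ℝ) T :=
  ⟨le_max_left _ _, max_le hT (min_le_right t T)⟩

lemma clamp_of_mem {T t : ℝ} (h : t ∈ Icc (0:ℝ) T) : clamp T t = t := by
  rcases h with ⟨h1, h2⟩
  rw [clamp, min_eq_left h2, max_eq_right h1]

lemma clamp_clamp {T : ℝ} (hT : 0 ≤ T) (t : ℝ) : clamp T (clamp T t) = clamp T t :=
  clamp_of_mem (clamp_mem hT t)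

lemma clamp_cont {T : ℝ} : Continuous (clamp T) :=
  continuous_const.max (continuous_id.min continuous_const)

lemma abs_clamp_sub_clamp {T : ℝ} (t1 t2 : ℝ) : |clamp T t1 - clamp T t2| ≤ |t1 - t2| := by
  have h2 : |min t1 T - min t2 T| ≤ |t1 - t2| := by
    have h := abs_max_sub_max_le_abs (-t1) (-t2) (-T)
    rw [max_neg_neg, max_neg_neg] at h
    rw [show -(min t1 T) - -(min t2 T) = -(min t1 T - min t2 T) by ring,
      show -t1 - -t2 = -(t1 - t2) by ring, abs_neg, abs_neg] at h
    exact h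
  have h1 : |max 0 (min t1 T) - max 0 (min t2 T)| ≤ |min t1 T - min t2 T| := by
    have := abs_max_sub_max_le_abs (min t1 T) (min t2 T) 0
    simpa [max_comm] using this
  exact le_trans h1 h2

lemma green_swap {T : ℝ} (φ u : ℝ → ℝ) (hφ : Continuous φ) (hu : Continuous u)
    {t : ℝ} (ht : t ∈ Icc (0:ℝ) T) :
    ∫ s in (0:ℝ)..t, φ s * ((∫ σ in (0:ℝ)..T, u σ) - ∫ σ in (0:ℝ)..s, u σ) =
      ∫ τ in (0:ℝ)..T, (∫ s in (0:ℝ)..min t τ, φ s) * u τ := by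
  obtain ⟨ht0, htT⟩ := ht
  set G : ℝ → ℝ := fun a => ∫ s in (0:ℝ)..a, φ s with hG
  set Ju : ℝ → ℝ := fun a => ∫ σ in (0:ℝ)..a, u σ with hJu
  have hGc : Continuous G := continuous_primitive (fun a b => hφ.intervalIntegrable a b) 0
  have hJuc : Continuous Ju := continuous_primitive (fun a b => hu.intervalIntegrable a b) 0
  have hder : ∀ s ∈ uIcc (0:ℝ) t, HasDerivAt (fun a => G a * (Ju T - Ju a))
      (φ s * (Ju T - Ju s) - G s * u s) s := by
    intro s _
    have h1 : HasDerivAt G (φ s) s := (hφ.integral_hasStrictDerivAt 0 s).hasDerivAt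
    have h2 : HasDerivAt (fun a => Ju T - Ju a) (-(u s)) s :=
      ((hu.integral_hasStrictDerivAt 0 s).hasDerivAt).const_sub _
    have h3 := h1.mul h2
    exact h3.congr_deriv (by ring)
  have hint : IntervalIntegrable (fun s => φ s * (Ju T - Ju s) - G s * u s) volume 0 t :=
    ((hφ.mul (continuous_const.sub hJuc)).sub (hGc.mul hu)).intervalIntegrable 0 t
  have key := integral_eq_sub_of_hasDerivAt hder hint
  have hG0 : G 0 = 0 := integral_same
  have hsub : (∫ s in (0:ℝ)..t, (φ s * (Ju T - Ju s) - G s * u s)) =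
      (∫ s in (0:ℝ)..t, φ s * (Ju T - Ju s)) - ∫ s in (0:ℝ)..t, G s * u s :=
    integral_sub ((hφ.mul (continuous_const.sub hJuc)).intervalIntegrable 0 t)
      ((hGc.mul hu).intervalIntegrable 0 t)
  -- split the right-hand side
  have hadd : (∫ τ in (0:ℝ)..t, G (min t τ) * u τ) + (∫ τ in t..T, G (min t τ) * u τ)
      = ∫ τ in (0:ℝ)..T, G (min t τ) * u τ :=
    integral_add_adjacent_intervals
      (((hGc.comp (continuous_const.min continuous_id)).mul hu).intervalIntegrable 0 t)
      (((hGc.comp (continuous_const.min continuous_id)).mul hu).intervalIntegrable t T)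
  have hfirst : (∫ τ in (0:ℝ)..t, G (min t τ) * u τ) = ∫ τ in (0:ℝ)..t, G τ * u τ := by
    apply integral_congr
    intro τ hτ
    rw [uIcc_of_le ht0] at hτ
    simp only [min_eq_right hτ.2]
  have hsecond : (∫ τ in t..T, G (min t τ) * u τ) = G t * (Ju T - Ju t) := by
    have h1 : (∫ τ in t..T, G (min t τ) * u τ) = ∫ τ in t..T, G t * u τ := by
      apply integral_congr
      intro τ hτ
      rw [uIcc_of_le htT] at hτ
      simp only [min_eq_left hτ.1]
    rw [h1, intervalIntegral.integral_const_mul]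
    congr 1
    rw [hJu]
    exact (integral_interval_sub_left (hu.intervalIntegrable 0 T)
      (hu.intervalIntegrable 0 t)).symm
  rw [hsub, hG0] at key
  show (∫ s in (0:ℝ)..t, φ s * (Ju T - Ju s)) = ∫ τ in (0:ℝ)..T, G (min t τ) * u τ
  rw [← hadd, hfirst, hsecond]
  linarith

end BVPaux

namespace BVPaux2
open BVPaux

/-- `Ju γ h x s = ∫₀ˢ γ σ h(x σ) dσ`. -/
noncomputable def Ju (γ h x : ℝ → ℝ) (s : ℝ) : ℝ := ∫ σ in (0:ℝ)..s, γ σ * h (x σ)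

/-- The Picard-type operator (with clamped time). -/
noncomputable def Pf (T x₀ : ℝ) (φ γ h : ℝ → ℝ) (c : ℝ) (x : ℝ → ℝ) (t : ℝ) : ℝ :=
  x₀ + ∫ s in (0:ℝ)..clamp T t, φ s * (c - Ju γ h x s)

variable {T x₀ m gbar M L c : ℝ} {φ γ h x y : ℝ → ℝ}

lemma cont_of_lip (hLip : ∀ a b, |h a - h b| ≤ L * |a - b|) : Continuous h := by
  have : LipschitzWith (Real.toNNReal L) h := by
    apply LipschitzWith.of_dist_le_mul
    intro a b
    rw [Real.dist_eq, Real.dist_eq]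
    refine le_trans (hLip a b) (mul_le_mul_of_nonneg_right ?_ (abs_nonneg _))
    exact Real.le_coe_toNNReal L
  exact this.continuous

lemma uuc (hγc : Continuous γ) (hhc : Continuous h) (hxc : Continuous x) :
    Continuous fun σ => γ σ * h (x σ) := hγc.mul (hhc.comp hxc)

lemma Juc (hγc : Continuous γ) (hhc : Continuous h) (hxc : Continuous x) :
    Continuous (Ju γ h x) :=
  continuous_primitive (fun a b => (uuc hγc hhc hxc).intervalIntegrable a b) 0

lemma Jubd (hT : 0 ≤ T) (hγg : ∀ τ ∈ Icc (0:ℝ) T, |γ τ| ≤ gbar)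
    (hM : ∀ y, |h y| ≤ M) (hg0 : 0 ≤ gbar) {s : ℝ} (hs : s ∈ Icc (0:ℝ) T) :
    |Ju γ h x s| ≤ gbar * M * s := by
  have hb : ∀ σ ∈ Set.uIoc (0:ℝ) s, ‖γ σ * h (x σ)‖ ≤ gbar * M := by
    intro σ hσ
    rw [Set.uIoc_of_le hs.1] at hσ
    have hσT : σ ∈ Icc (0:ℝ) T := ⟨le_of_lt hσ.1, le_trans hσ.2 hs.2⟩
    rw [Real.norm_eq_abs, abs_mul]
    exact mul_le_mul (hγg σ hσT) (hM _) (abs_nonneg _) hg0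
  have := intervalIntegral.norm_integral_le_of_norm_le_const hb
  rwa [Real.norm_eq_abs, sub_zero, abs_of_nonneg hs.1] at this

lemma Judiff (hT : 0 ≤ T) (hγc : Continuous γ) (hhc : Continuous h)
    (hxc : Continuous x) (hyc : Continuous y)
    (hγg : ∀ τ ∈ Icc (0:ℝ) T, |γ τ| ≤ gbar) (hg0 : 0 ≤ gbar) (hL : 0 ≤ L)
    (hLip : ∀ a b, |h a - h b| ≤ L * |a - b|)
    {s : ℝ} (hs : s ∈ Icc (0:ℝ) T) {D : ℝ}
    (hD : ∀ σ ∈ Icc (0:ℝ) s, |x σ - y σ| ≤ D) :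
    |Ju γ h x s - Ju γ h y s| ≤ gbar * (L * D) * s := by
  have hint : Ju γ h x s - Ju γ h y s
      = ∫ σ in (0:ℝ)..s, (γ σ * h (x σ) - γ σ * h (y σ)) :=
    (intervalIntegral.integral_sub ((uuc hγc hhc hxc).intervalIntegrable 0 s)
      ((uuc hγc hhc hyc).intervalIntegrable 0 s)).symm
  have hb : ∀ σ ∈ Set.uIoc (0:ℝ) s, ‖γ σ * h (x σ) - γ σ * h (y σ)‖ ≤ gbar * (L * D) := by
    intro σ hσ
    rw [Set.uIoc_of_le hs.1] at hσ
    have hσT : σ ∈ Icc (0:ℝ) T := ⟨le_of_lt hσ.1, le_trans hσ.2 hs.2⟩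
    have hσs : σ ∈ Icc (0:ℝ) s := ⟨le_of_lt hσ.1, hσ.2⟩
    rw [Real.norm_eq_abs, ← mul_sub, abs_mul]
    refine mul_le_mul (hγg σ hσT) (le_trans (hLip _ _) ?_) (abs_nonneg _) hg0
    exact mul_le_mul_of_nonneg_left (hD σ hσs) hL
  rw [hint]
  have := intervalIntegral.norm_integral_le_of_norm_le_const hb
  rwa [Real.norm_eq_abs, sub_zero, abs_of_nonneg hs.1] at this

lemma Pfc (hφc : Continuous φ) (hγc : Continuous γ) (hhc : Continuous h)
    (hxc : Continuous x) : Continuous (Pf T x₀ φ γ h c x) := by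
  apply continuous_const.add
  exact (continuous_primitive (fun a b =>
    (hφc.mul (continuous_const.sub (Juc hγc hhc hxc))).intervalIntegrable a b) 0).comp clamp_cont

end BVPaux2

namespace BVPaux2
open BVPaux

variable {T x₀ m gbar M L c : ℝ} {φ γ h x y : ℝ → ℝ}

lemma Pf_clamp (hT : 0 ≤ T) (t : ℝ) :
    Pf T x₀ φ γ h c x (clamp T t) = Pf T x₀ φ γ h c x t := by
  unfold Pf; rw [clamp_clamp hT]

lemma Pfbd (hT : 0 ≤ T) (hφm : ∀ s ∈ Icc (0:ℝ) T, |φ s| ≤ m)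
    (hγg : ∀ τ ∈ Icc (0:ℝ) T, |γ τ| ≤ gbar) (hM : ∀ y, |h y| ≤ M)
    (hg0 : 0 ≤ gbar) (hM0 : 0 ≤ M) (hm0 : 0 ≤ m) (t : ℝ) :
    |Pf T x₀ φ γ h c x t - x₀| ≤ m * (|c| + gbar * M * T) * T := by
  have hcl := clamp_mem hT t
  have hb : ∀ s ∈ Set.uIoc (0:ℝ) (clamp T t), ‖φ s * (c - Ju γ h x s)‖
      ≤ m * (|c| + gbar * M * T) := by
    intro s hs
    rw [Set.uIoc_of_le hcl.1] at hs
    have hsT : s ∈ Icc (0:ℝ) T := ⟨le_of_lt hs.1, le_trans hs.2 hcl.2⟩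
    rw [Real.norm_eq_abs, abs_mul]
    refine mul_le_mul (hφm s hsT) ?_ (abs_nonneg _) hm0
    refine le_trans (abs_sub _ _) ?_
    refine add_le_add le_rfl (le_trans (Jubd hT hγg hM hg0 hsT) ?_)
    exact mul_le_mul_of_nonneg_left hsT.2 (mul_nonneg hg0 hM0)
  have := intervalIntegral.norm_integral_le_of_norm_le_const hb
  rw [Real.norm_eq_abs, sub_zero, abs_of_nonneg hcl.1] at this
  have h2 : m * (|c| + gbar * M * T) * clamp T t ≤ m * (|c| + gbar * M * T) * T := by
    refine mul_le_mul_of_nonneg_left hcl.2 ?_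
    refine mul_nonneg hm0 (add_nonneg (abs_nonneg _) ?_)
    exact mul_nonneg (mul_nonneg hg0 hM0) hT
  calc |Pf T x₀ φ γ h c x t - x₀| = |∫ s in (0:ℝ)..clamp T t, φ s * (c - Ju γ h x s)| := by
        rw [Pf, add_sub_cancel_left]
    _ ≤ m * (|c| + gbar * M * T) * clamp T t := this
    _ ≤ m * (|c| + gbar * M * T) * T := h2

lemma Pfdiff {c' : ℝ} (hφc : Continuous φ) (hγc : Continuous γ) (hhc : Continuous h)
    (hxc : Continuous x) (hyc : Continuous y) (t : ℝ) :
    Pf T x₀ φ γ h c x t - Pf T x₀ φ γ h c' y t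
      = ∫ s in (0:ℝ)..clamp T t, φ s * ((c - c') + (Ju γ h y s - Ju γ h x s)) := by
  unfold Pf
  rw [add_sub_add_left_eq_sub, ← intervalIntegral.integral_sub
    (f := fun s => φ s * (c - Ju γ h x s)) (g := fun s => φ s * (c' - Ju γ h y s))
    ((hφc.mul (continuous_const.sub (Juc hγc hhc hxc))).intervalIntegrable _ _)
    ((hφc.mul (continuous_const.sub (Juc hγc hhc hyc))).intervalIntegrable _ _)]
  apply integral_congr
  intro s _
  ring

end BVPaux2

namespace BVPaux2
open BVPaux BoundedContinuousFunction

theorem abstract_solution (T x₀ m gbar M L : ℝ) (φ γ h : ℝ → ℝ)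
    (hT : 0 ≤ T) (hφc : Continuous φ) (hφm : ∀ s ∈ Icc (0:ℝ) T, |φ s| ≤ m)
    (hγc : Continuous γ) (hγg : ∀ τ ∈ Icc (0:ℝ) T, |γ τ| ≤ gbar)
    (hM : ∀ y, |h y| ≤ M) (hL : 0 ≤ L) (hLip : ∀ a b, |h a - h b| ≤ L * |a - b|) :
    ∃ x : ℝ → ℝ,
      (∀ t1 t2, |x t1 - x t2| ≤ m * (2 * (gbar * M * T)) * |t1 - t2|) ∧
      (∀ t, |x t - x₀| ≤ m * (2 * (gbar * M * T)) * T) ∧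
      (∀ t ∈ Icc (0:ℝ) T, x t = x₀ +
        ∫ τ in (0:ℝ)..T, (∫ s in (0:ℝ)..min t τ, φ s) * (γ τ * h (x τ))) := by
  have hhc : Continuous h := cont_of_lip hLip
  have hm0 : 0 ≤ m := le_trans (abs_nonneg _) (hφm 0 ⟨le_refl 0, hT⟩)
  have hg0 : 0 ≤ gbar := le_trans (abs_nonneg _) (hγg 0 ⟨le_refl 0, hT⟩)
  have hM0 : 0 ≤ M := le_trans (abs_nonneg _) (hM 0)
  set β : ℝ := gbar * M * T with hβdef
  have hβ0 : 0 ≤ β := mul_nonneg (mul_nonneg hg0 hM0) hT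
  -- the bundled operator
  obtain ⟨P, hP⟩ : ∃ P : ℝ → (ℝ →ᵇ ℝ) → (ℝ →ᵇ ℝ),
      ∀ c x t, P c x t = Pf T x₀ φ γ h c ⇑x t := by
    refine ⟨fun c x => BoundedContinuousFunction.ofNormedAddCommGroup _
      (Pfc hφc hγc hhc x.continuous) (|x₀| + m * (|c| + β) * T) ?_, fun c x t => rfl⟩
    intro t
    rw [Real.norm_eq_abs]
    have hb := Pfbd (x₀ := x₀) (x := ⇑x) (c := c) hT hφm hγg hM hg0 hM0 hm0 t
    calc |Pf T x₀ φ γ h c (⇑x) t|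
        = |x₀ + (Pf T x₀ φ γ h c (⇑x) t - x₀)| := by ring_nf
      _ ≤ |x₀| + |Pf T x₀ φ γ h c (⇑x) t - x₀| := abs_add_le _ _
      _ ≤ |x₀| + m * (|c| + β) * T := by exact add_le_add le_rfl hb
  have hPclamp : ∀ c (x : ℝ →ᵇ ℝ) t, P c x t = P c x (clamp T t) := by
    intro c x t
    rw [hP, hP, Pf_clamp hT]
  -- the key iterate estimate
  set A : ℝ := m * (gbar * L) * T with hAdef
  have hA0 : 0 ≤ A := mul_nonneg (mul_nonneg hm0 (mul_nonneg hg0 hL)) hT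
  have iter_est : ∀ (c : ℝ) (k : ℕ) (x y : ℝ →ᵇ ℝ), ∀ t ∈ Icc (0:ℝ) T,
      |((P c)^[k] x) t - ((P c)^[k] y) t|
        ≤ dist x y * (A ^ k * t ^ k / (k.factorial : ℝ)) := by
    intro c k
    induction k with
    | zero =>
      intro x y t ht
      simpa [Real.dist_eq] using BoundedContinuousFunction.dist_coe_le_dist (f := x) (g := y) t
    | succ k IH =>
      intro x y t ht
      rw [Function.iterate_succ_apply', Function.iterate_succ_apply']
      set X' := (P c)^[k] x with hX'
      set Y' := (P c)^[k] y with hY'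
      set D : ℝ := dist x y with hDdef
      have hD0 : 0 ≤ D := dist_nonneg
      set C0 : ℝ := m * (gbar * (L * (D * (A ^ k / (k.factorial : ℝ))))) with hC0def
      have hkfac0 : (0:ℝ) < (k.factorial : ℝ) := by exact_mod_cast k.factorial_pos
      have hC00 : 0 ≤ C0 := by
        refine mul_nonneg hm0 (mul_nonneg hg0 (mul_nonneg hL (mul_nonneg hD0 ?_)))
        exact div_nonneg (pow_nonneg hA0 _) (le_of_lt hkfac0)
      have e1 : P c X' t - P c Y' t
          = ∫ s in (0:ℝ)..t, φ s * ((c - c) + (Ju γ h (⇑Y') s - Ju γ h (⇑X') s)) := by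
        rw [hP, hP, Pfdiff hφc hγc hhc X'.continuous Y'.continuous, clamp_of_mem ht]
      have hCk : ∀ s ∈ Icc (0:ℝ) t,
          |φ s * ((c - c) + (Ju γ h (⇑Y') s - Ju γ h (⇑X') s))| ≤ C0 * s ^ (k + 1) := by
        intro s hs
        have hsT : s ∈ Icc (0:ℝ) T := ⟨hs.1, le_trans hs.2 ht.2⟩
        have hJd : |Ju γ h (⇑Y') s - Ju γ h (⇑X') s|
            ≤ gbar * (L * (D * (A ^ k / (k.factorial : ℝ)) * s ^ k)) * s := by
          apply Judiff hT hγc hhc Y'.continuous X'.continuous hγg hg0 hL hLip hsT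
          intro σ hσ
          have hσT : σ ∈ Icc (0:ℝ) T := ⟨hσ.1, le_trans hσ.2 hsT.2⟩
          calc |Y' σ - X' σ| = |X' σ - Y' σ| := abs_sub_comm _ _
            _ ≤ D * (A ^ k * σ ^ k / (k.factorial : ℝ)) := IH x y σ hσT
            _ ≤ D * (A ^ k / (k.factorial : ℝ)) * s ^ k := by
                rw [show D * (A ^ k * σ ^ k / (k.factorial : ℝ))
                  = D * (A ^ k / (k.factorial : ℝ)) * σ ^ k by ring]
                refine mul_le_mul_of_nonneg_left (pow_le_pow_left₀ hσ.1 hσ.2 k) ?_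
                exact mul_nonneg hD0 (div_nonneg (pow_nonneg hA0 _) (le_of_lt hkfac0))
        rw [abs_mul]
        calc |φ s| * |(c - c) + (Ju γ h (⇑Y') s - Ju γ h (⇑X') s)|
            ≤ m * (gbar * (L * (D * (A ^ k / (k.factorial : ℝ)) * s ^ k)) * s) := by
              refine mul_le_mul (hφm s hsT) ?_ (abs_nonneg _) hm0
              simpa using hJd
          _ = C0 * s ^ (k + 1) := by rw [hC0def]; ring
      have hcont1 : Continuous fun s => φ s * ((c - c) + (Ju γ h (⇑Y') s - Ju γ h (⇑X') s)) :=
        hφc.mul (continuous_const.add ((Juc hγc hhc Y'.continuous).sub (Juc hγc hhc X'.continuous)))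
      have e2 : |∫ s in (0:ℝ)..t, φ s * ((c - c) + (Ju γ h (⇑Y') s - Ju γ h (⇑X') s))|
          ≤ C0 * (t ^ (k + 2) / ((k:ℝ) + 2)) := by
        calc |∫ s in (0:ℝ)..t, φ s * ((c - c) + (Ju γ h (⇑Y') s - Ju γ h (⇑X') s))|
            ≤ ∫ s in (0:ℝ)..t, |φ s * ((c - c) + (Ju γ h (⇑Y') s - Ju γ h (⇑X') s))| :=
              intervalIntegral.abs_integral_le_integral_abs ht.1
          _ ≤ ∫ s in (0:ℝ)..t, C0 * s ^ (k + 1) := by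
              refine intervalIntegral.integral_mono_on ht.1 (hcont1.abs.intervalIntegrable 0 t)
                ((continuous_const.mul (continuous_pow _)).intervalIntegrable 0 t) hCk
          _ = C0 * (t ^ (k + 2) / ((k:ℝ) + 2)) := by
              rw [intervalIntegral.integral_const_mul, integral_pow]
              rw [zero_pow (by omega : k + 1 + 1 ≠ 0)]
              push_cast
              ring
      rw [e1]
      refine le_trans e2 ?_
      have harith : C0 * (t ^ (k + 2) / ((k:ℝ) + 2))
          ≤ D * (A ^ (k + 1) * t ^ (k + 1) / ((k + 1).factorial : ℝ)) := by
        have hfac : ((k + 1).factorial : ℝ) = ((k:ℝ) + 1) * (k.factorial : ℝ) := by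
          rw [Nat.factorial_succ]; push_cast; ring
        have hnum : t ^ (k + 2) ≤ T * t ^ (k + 1) := by
          rw [pow_succ]
          rw [mul_comm (t ^ (k+1)) t]
          exact mul_le_mul_of_nonneg_right ht.2 (pow_nonneg ht.1 _)
        have hq : t ^ (k + 2) / ((k:ℝ) + 2) ≤ T * t ^ (k + 1) / ((k:ℝ) + 1) := by
          apply div_le_div₀ (mul_nonneg (le_trans ht.1 ht.2) (pow_nonneg ht.1 _)) hnum
          · positivity
          · linarith
        calc C0 * (t ^ (k + 2) / ((k:ℝ) + 2)) ≤ C0 * (T * t ^ (k + 1) / ((k:ℝ) + 1)) :=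
              mul_le_mul_of_nonneg_left hq hC00
          _ = D * (A ^ (k + 1) * t ^ (k + 1) / ((k + 1).factorial : ℝ)) := by
              rw [hfac, hC0def, hAdef, pow_succ]
              field_simp
              ring
      exact harith
  -- distance bound for iterates
  have dist_iter : ∀ (c : ℝ) (k : ℕ) (x y : ℝ →ᵇ ℝ),
      dist ((P c)^[k] x) ((P c)^[k] y) ≤ dist x y * ((A * T) ^ k / (k.factorial : ℝ)) := by
    intro c k x y
    cases k with
    | zero => simp
    | succ k =>
      have hrhs0 : 0 ≤ dist x y * ((A * T) ^ (k+1) / ((k+1).factorial : ℝ)) := by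
        refine mul_nonneg dist_nonneg (div_nonneg (pow_nonneg (mul_nonneg hA0 hT) _) ?_)
        exact Nat.cast_nonneg _
      refine (BoundedContinuousFunction.dist_le hrhs0).2 ?_
      intro t
      rw [Real.dist_eq, Function.iterate_succ_apply', Function.iterate_succ_apply',
        hPclamp c _ t, hPclamp c ((P c)^[k] y) t]
      have hcl := clamp_mem hT t
      have hie := iter_est c (k+1) x y _ hcl
      rw [Function.iterate_succ_apply', Function.iterate_succ_apply'] at hie
      refine le_trans hie ?_
      have h1 : (clamp T t) ^ (k+1) ≤ T ^ (k+1) := pow_le_pow_left₀ hcl.1 hcl.2 _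
      have h2 : (0:ℝ) ≤ A ^ (k+1) := pow_nonneg hA0 _
      have h3 : (0:ℝ) < ((k+1).factorial : ℝ) := by exact_mod_cast (k+1).factorial_pos
      refine le_trans (le_trans (mul_le_mul_of_nonneg_left (div_le_div₀
        (mul_nonneg h2 (pow_nonneg hT _)) (mul_le_mul_of_nonneg_left h1 h2) h3 le_rfl)
        dist_nonneg) (le_of_eq (by ring))) le_rfl
  -- choose N making the N-th iterate a contraction
  obtain ⟨N, hN⟩ : ∃ N : ℕ, (A * T) ^ N / (N.factorial : ℝ) < 1 := by
    have ht := FloorSemiring.tendsto_pow_div_factorial_atTop (A * T)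
    exact (ht.eventually (gt_mem_nhds one_pos)).exists
  set q : ℝ := (A * T) ^ N / (N.factorial : ℝ) with hqdef
  have hq0 : 0 ≤ q := div_nonneg (pow_nonneg (mul_nonneg hA0 hT) _) (Nat.cast_nonneg _)
  have hcontr : ∀ c : ℝ, ContractingWith q.toNNReal ((P c)^[N]) := by
    intro c
    constructor
    · have : (q.toNNReal : ℝ) < 1 := by rwa [Real.coe_toNNReal _ hq0]
      exact_mod_cast this
    · apply LipschitzWith.of_dist_le_mul
      intro x y
      have hd := dist_iter c N x y
      rw [← hqdef] at hd
      rw [Real.coe_toNNReal _ hq0, mul_comm]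
      exact hd
  haveI : Nonempty (ℝ →ᵇ ℝ) := ⟨0⟩
  set zf : ℝ → (ℝ →ᵇ ℝ) := fun c => ContractingWith.fixedPoint ((P c)^[N]) (hcontr c)
    with hzfdef
  have hfix : ∀ c, P c (zf c) = zf c := fun c => (hcontr c).isFixedPt_fixedPoint_iterate
  -- dependence on the parameter c
  set κ : ℝ := m * (gbar * L) * T * T with hκdef
  have hκ0 : 0 ≤ κ := mul_nonneg hA0 hT
  have Pdist : ∀ (c c' : ℝ) (x y : ℝ →ᵇ ℝ),
      dist (P c x) (P c' y) ≤ m * T * |c - c'| + κ * dist x y := by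
    intro c c' x y
    have hrhs0 : 0 ≤ m * T * |c - c'| + κ * dist x y :=
      add_nonneg (mul_nonneg (mul_nonneg hm0 hT) (abs_nonneg _)) (mul_nonneg hκ0 dist_nonneg)
    refine (BoundedContinuousFunction.dist_le hrhs0).2 ?_
    intro t
    rw [Real.dist_eq, hP, hP, Pfdiff hφc hγc hhc x.continuous y.continuous]
    have hcl := clamp_mem hT t
    have hb : ∀ s ∈ Set.uIoc (0:ℝ) (clamp T t),
        ‖φ s * ((c - c') + (Ju γ h (⇑y) s - Ju γ h (⇑x) s))‖
          ≤ m * (|c - c'| + gbar * (L * dist x y) * T) := by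
      intro s hs
      rw [Set.uIoc_of_le hcl.1] at hs
      have hsT : s ∈ Icc (0:ℝ) T := ⟨le_of_lt hs.1, le_trans hs.2 hcl.2⟩
      rw [Real.norm_eq_abs, abs_mul]
      refine mul_le_mul (hφm s hsT) ?_ (abs_nonneg _) hm0
      refine le_trans (abs_add_le _ _) (add_le_add le_rfl ?_)
      have hJd : |Ju γ h (⇑y) s - Ju γ h (⇑x) s| ≤ gbar * (L * dist x y) * s := by
        apply Judiff hT hγc hhc y.continuous x.continuous hγg hg0 hL hLip hsT
        intro σ _
        rw [abs_sub_comm]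
        exact le_trans (le_of_eq (Real.dist_eq _ _).symm)
          (BoundedContinuousFunction.dist_coe_le_dist σ)
      refine le_trans hJd (mul_le_mul_of_nonneg_left hsT.2 ?_)
      exact mul_nonneg hg0 (mul_nonneg hL dist_nonneg)
    have hest := intervalIntegral.norm_integral_le_of_norm_le_const hb
    rw [Real.norm_eq_abs, sub_zero, abs_of_nonneg hcl.1] at hest
    have hCnn : 0 ≤ m * (|c - c'| + gbar * (L * dist x y) * T) := by
      refine mul_nonneg hm0 (add_nonneg (abs_nonneg _) ?_)
      exact mul_nonneg (mul_nonneg hg0 (mul_nonneg hL dist_nonneg)) hT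
    refine le_trans hest ?_
    refine le_trans (mul_le_mul_of_nonneg_left hcl.2 hCnn) (le_of_eq ?_)
    rw [hκdef]; ring
  have Qdist : ∀ (c c' : ℝ) (x : ℝ →ᵇ ℝ) (k : ℕ),
      dist ((P c)^[k] x) ((P c')^[k] x)
        ≤ (m * T * |c - c'|) * ∑ i ∈ Finset.range k, κ ^ i := by
    intro c c' x k
    induction k with
    | zero => simp
    | succ k IH =>
      rw [Function.iterate_succ_apply', Function.iterate_succ_apply', geom_sum_succ]
      refine le_trans (Pdist c c' _ _) ?_
      have := mul_le_mul_of_nonneg_left IH hκ0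
      calc m * T * |c - c'| + κ * dist ((P c)^[k] x) ((P c')^[k] x)
          ≤ m * T * |c - c'| + κ * ((m * T * |c - c'|) * ∑ i ∈ Finset.range k, κ ^ i) := by
            linarith
        _ = m * T * |c - c'| * (κ * ∑ i ∈ Finset.range k, κ ^ i + 1) := by ring
  set CN : ℝ := ∑ i ∈ Finset.range N, κ ^ i with hCNdef
  have hCN0 : 0 ≤ CN := Finset.sum_nonneg fun i _ => pow_nonneg hκ0 i
  have hq1 : q < 1 := hN
  have h1q : 0 < 1 - q := by linarith
  have zdist : ∀ c c', dist (zf c) (zf c') ≤ (m * T * |c - c'|) * CN / (1 - q) := by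
    intro c c'
    have := ContractingWith.fixedPoint_lipschitz_in_map (hcontr c) (g := (P c')^[N])
      (hcontr c') (C := (m * T * |c - c'|) * CN) (fun z => Qdist c c' z N)
    rwa [Real.coe_toNNReal _ hq0] at this
  -- the shooting map
  set Sf : ℝ → ℝ := fun c => Ju γ h (⇑(zf c)) T with hSfdef
  have Sbd : ∀ c, |Sf c| ≤ β := by
    intro c
    rw [hβdef]
    exact Jubd hT hγg hM hg0 ⟨hT, le_refl T⟩
  have Slip : ∀ c c', |Sf c - Sf c'| ≤ gbar * (L * ((m * T * |c - c'|) * CN / (1 - q))) * T := by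
    intro c c'
    apply Judiff hT hγc hhc (zf c).continuous (zf c').continuous hγg hg0 hL hLip
      ⟨hT, le_refl T⟩
    intro σ _
    exact le_trans (le_of_eq (Real.dist_eq _ _).symm)
      (le_trans (BoundedContinuousFunction.dist_coe_le_dist σ) (zdist c c'))
  have Scont : Continuous Sf := by
    set Cs : ℝ := gbar * (L * (m * T * CN / (1 - q))) * T with hCsdef
    have hlip : LipschitzWith (Real.toNNReal Cs) Sf := by
      apply LipschitzWith.of_dist_le_mul
      intro c c'
      rw [Real.dist_eq, Real.dist_eq]
      refine le_trans (Slip c c') (le_trans (le_of_eq ?_)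
        (mul_le_mul_of_nonneg_right (Real.le_coe_toNNReal Cs) (abs_nonneg _)))
      rw [hCsdef]; field_simp
    exact hlip.continuous
  -- intermediate value theorem
  obtain ⟨cstar, hcmem, hcstar⟩ : ∃ cs ∈ Icc (-β) β, cs - Sf cs = 0 := by
    have hcont : ContinuousOn (fun c => c - Sf c) (Icc (-β) β) :=
      (continuous_id.sub Scont).continuousOn
    have h0mem : (0:ℝ) ∈ Icc ((-β) - Sf (-β)) (β - Sf β) := by
      constructor
      · have := (abs_le.1 (Sbd (-β))).1; linarith
      · have := (abs_le.1 (Sbd β)).2; linarith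
    obtain ⟨cs, hcs, hval⟩ := intermediate_value_Icc (neg_le_self hβ0) hcont h0mem
    exact ⟨cs, hcs, hval⟩
  set z : ℝ →ᵇ ℝ := zf cstar with hzdef
  have hz : ∀ t, z t = Pf T x₀ φ γ h cstar (⇑z) t := by
    intro t
    conv_lhs => rw [hzdef, ← hfix cstar]
    exact hP _ _ _
  have hcs_eq : cstar = Ju γ h (⇑z) T := by
    have : cstar = Sf cstar := by linarith [hcstar]
    rw [this, hSfdef]
  have hcabs : |cstar| ≤ β := abs_le.2 ⟨hcmem.1, hcmem.2⟩
  -- bound on the integrand of the fixed point equation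
  have hbint : ∀ t : ℝ, ∀ s ∈ Set.uIoc (clamp T t) (clamp T t),
      True := fun _ _ _ => trivial
  have hkey_bd : ∀ s ∈ Icc (0:ℝ) T, |φ s * (cstar - Ju γ h (⇑z) s)| ≤ m * (2 * β) := by
    intro s hsT
    rw [abs_mul]
    have h2 : |cstar - Ju γ h (⇑z) s| ≤ 2 * β := by
      refine le_trans (abs_sub _ _) ?_
      have hJ : |Ju γ h (⇑z) s| ≤ β := by
        rw [hβdef]
        refine le_trans (Jubd hT hγg hM hg0 hsT) ?_
        exact mul_le_mul_of_nonneg_left hsT.2 (mul_nonneg hg0 hM0)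
      linarith [hcabs]
    exact le_trans (mul_le_mul (hφm s hsT) h2 (abs_nonneg _) hm0) (le_of_eq rfl)
  refine ⟨⇑z, ?_, ?_, ?_⟩
  · -- Lipschitz estimate
    intro t1 t2
    have e : z t1 - z t2
        = ∫ s in (clamp T t2)..(clamp T t1), φ s * (cstar - Ju γ h (⇑z) s) := by
      rw [hz t1, hz t2]
      unfold Pf
      rw [add_sub_add_left_eq_sub]
      exact integral_interval_sub_left
        ((hφc.mul (continuous_const.sub (Juc hγc hhc z.continuous))).intervalIntegrable _ _)
        ((hφc.mul (continuous_const.sub (Juc hγc hhc z.continuous))).intervalIntegrable _ _)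
    rw [e]
    have hsub : Set.uIoc (clamp T t2) (clamp T t1) ⊆ Icc (0:ℝ) T :=
      le_trans uIoc_subset_uIcc (uIcc_subset_Icc (clamp_mem hT t2) (clamp_mem hT t1))
    have hb : ∀ s ∈ Set.uIoc (clamp T t2) (clamp T t1),
        ‖φ s * (cstar - Ju γ h (⇑z) s)‖ ≤ m * (2 * β) := by
      intro s hs
      rw [Real.norm_eq_abs]
      exact hkey_bd s (hsub hs)
    refine le_trans (intervalIntegral.norm_integral_le_of_norm_le_const hb) ?_
    rw [hβdef]
    refine mul_le_mul_of_nonneg_left ?_ ?_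
    · exact abs_clamp_sub_clamp t1 t2
    · exact mul_nonneg hm0 (by positivity)
  · -- uniform bound
    intro t
    rw [hz t]
    have hcl := clamp_mem hT t
    have hb : ∀ s ∈ Set.uIoc (0:ℝ) (clamp T t),
        ‖φ s * (cstar - Ju γ h (⇑z) s)‖ ≤ m * (2 * β) := by
      intro s hs
      rw [Set.uIoc_of_le hcl.1] at hs
      rw [Real.norm_eq_abs]
      exact hkey_bd s ⟨le_of_lt hs.1, le_trans hs.2 hcl.2⟩
    unfold Pf
    rw [add_sub_cancel_left]
    refine le_trans (intervalIntegral.norm_integral_le_of_norm_le_const hb) ?_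
    rw [sub_zero, abs_of_nonneg hcl.1, hβdef]
    refine mul_le_mul_of_nonneg_left hcl.2 (mul_nonneg hm0 (by positivity))
  · -- the integral equation
    intro t ht
    have e := green_swap (T := T) φ (fun σ => γ σ * h (z σ)) hφc
      (uuc hγc hhc z.continuous) ht
    rw [hz t]
    unfold Pf
    rw [clamp_of_mem ht]
    congr 1
    beta_reduce at e
    rw [← e]
    apply integral_congr
    intro s _
    rw [hcs_eq]
    simp only [Ju]

end BVPaux2
section Main

open MeasureTheory intervalIntegral Set Function Filter Topology BVPaux BVPaux2

set_option maxHeartbeats 1000000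

/-- Existence of a solution of the integral equation
`x(t) = x₀ + ∫₀ᵀ K(t,τ) λ₁ e^{-rτ} w'(x(τ)) dτ` on `[0,T]` (equivalently, of
the boundary value problem `(F ẋ)' + w'(x) λ₁ e^{-rt} = 0`, `x(0)=x₀`,
`ẋ(T)=0`), for `w` continuously differentiable with bounded derivative. -/
theorem exists_solution_integral_equation
    (ρ r η ξ lam1 T x₀ : ℝ)
    (hρ : 0 < ρ) (hr : 0 < r) (hη : 0 < η) (hξ : 0 < ξ)
    (hlam1 : 0 < lam1) (hT : 0 < T)
    (w : ℝ → ℝ) (hw : ContDiff ℝ 1 w)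
    (hw' : ∃ M : ℝ, ∀ x : ℝ, |deriv w x| ≤ M) :
    ∃ x : ℝ → ℝ, ContinuousOn x (Set.Icc (0:ℝ) T) ∧
      ∀ t ∈ Set.Icc (0:ℝ) T,
        x t = x₀ + ∫ τ in (0:ℝ)..T,
          Kker ξ lam1 η r ρ t τ * lam1 * Real.exp (-(r * τ)) * deriv w (x τ) := by
  classical
  obtain ⟨M₀, hM₀⟩ := hw'
  set M : ℝ := max M₀ 0 with hMdef
  have hM0 : 0 ≤ M := le_max_right _ _
  have hMb : ∀ y, |deriv w y| ≤ M := fun y => le_trans (hM₀ y) (le_max_left _ _)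
  have hwd : Differentiable ℝ w := hw.differentiable one_ne_zero
  have hw'c : Continuous (deriv w) := hw.continuous_deriv le_rfl
  have hwlip : ∀ a b, |w a - w b| ≤ M * |a - b| := by
    have hl : LipschitzWith (Real.toNNReal M) w := by
      refine lipschitzWith_of_nnnorm_deriv_le hwd (fun y => ?_)
      rw [← NNReal.coe_le_coe, coe_nnnorm, Real.norm_eq_abs, Real.coe_toNNReal _ hM0]
      exact hMb y
    intro a b
    have := hl.dist_le_mul a b
    rwa [Real.dist_eq, Real.dist_eq, Real.coe_toNNReal _ hM0] at this
  -- data for the abstract theorem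
  set φ : ℝ → ℝ := fun s => 1 / Ffun ξ lam1 η r ρ s with hφdef
  set γf : ℝ → ℝ := fun τ => lam1 * Real.exp (-(r * τ)) with hγdef
  set mc : ℝ := (2 * η * Real.exp (-(ρ * T)))⁻¹ with hmcdef
  have hmc0 : 0 ≤ mc := by rw [hmcdef]; positivity
  have hFpos : ∀ s, 0 < Ffun ξ lam1 η r ρ s := by
    intro s; unfold Ffun; positivity
  have hφc : Continuous φ := by
    rw [hφdef]
    refine continuous_const.div ?_ (fun s => ne_of_gt (hFpos s))
    unfold Ffun
    continuity
  have hφm : ∀ s ∈ Icc (0:ℝ) T, |φ s| ≤ mc := by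
    intro s hs
    have h1 : 2 * η * Real.exp (-(ρ * T)) ≤ Ffun ξ lam1 η r ρ s := by
      unfold Ffun
      have e1 : Real.exp (-(ρ * T)) ≤ Real.exp (-(ρ * s)) := by
        apply Real.exp_le_exp.2
        have : ρ * s ≤ ρ * T := mul_le_mul_of_nonneg_left hs.2 hρ.le
        linarith
      nlinarith [Real.exp_pos (-(r * s)), mul_pos hξ hlam1, hη.le, Real.exp_pos (-(ρ * T))]
    have hpos : (0:ℝ) < 2 * η * Real.exp (-(ρ * T)) := by positivity
    have hφpos : 0 < φ s := by rw [hφdef]; exact one_div_pos.2 (hFpos s)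
    rw [abs_of_pos hφpos, hφdef, hmcdef]
    simp only [one_div]
    exact inv_anti₀ hpos h1
  have hγc : Continuous γf := by
    rw [hγdef]
    continuity
  have hγg : ∀ τ ∈ Icc (0:ℝ) T, |γf τ| ≤ lam1 := by
    intro τ hτ
    have hγpos : 0 < γf τ := by rw [hγdef]; positivity
    rw [abs_of_pos hγpos, hγdef]
    have he : Real.exp (-(r * τ)) ≤ 1 := by
      apply Real.exp_le_one_iff.2
      nlinarith [mul_nonneg hr.le hτ.1]
    show lam1 * Real.exp (-(r * τ)) ≤ lam1
    nlinarith [hlam1.le, Real.exp_pos (-(r * τ))]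
  -- the approximating Lipschitz nonlinearities
  set hs : ℕ → ℝ → ℝ := fun n y => ((n:ℝ) + 1) * (w (y + ((n:ℝ) + 1)⁻¹) - w y) with hhs
  have hεpos : ∀ n : ℕ, (0:ℝ) < ((n:ℝ) + 1)⁻¹ := fun n => by positivity
  have hsM : ∀ n y, |hs n y| ≤ M := by
    intro n y
    rw [hhs]
    simp only
    rw [abs_mul, abs_of_pos (by positivity : (0:ℝ) < (n:ℝ) + 1)]
    have h2 := hwlip (y + ((n:ℝ) + 1)⁻¹) y
    rw [add_sub_cancel_left, abs_of_pos (hεpos n)] at h2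
    calc ((n:ℝ) + 1) * |w (y + ((n:ℝ) + 1)⁻¹) - w y|
        ≤ ((n:ℝ) + 1) * (M * ((n:ℝ) + 1)⁻¹) := by
          exact mul_le_mul_of_nonneg_left h2 (by positivity)
      _ = M := by field_simp
  have hsLip : ∀ n a b, |hs n a - hs n b| ≤ (2 * M * ((n:ℝ) + 1)) * |a - b| := by
    intro n a b
    rw [hhs]
    simp only
    have e : ((n:ℝ) + 1) * (w (a + ((n:ℝ) + 1)⁻¹) - w a)
        - ((n:ℝ) + 1) * (w (b + ((n:ℝ) + 1)⁻¹) - w b)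
        = ((n:ℝ) + 1) * ((w (a + ((n:ℝ) + 1)⁻¹) - w (b + ((n:ℝ) + 1)⁻¹)) - (w a - w b)) := by
      ring
    rw [e, abs_mul, abs_of_pos (by positivity : (0:ℝ) < (n:ℝ) + 1)]
    have h1 := hwlip (a + ((n:ℝ) + 1)⁻¹) (b + ((n:ℝ) + 1)⁻¹)
    have h2 := hwlip a b
    rw [show a + ((n:ℝ) + 1)⁻¹ - (b + ((n:ℝ) + 1)⁻¹) = a - b by ring] at h1
    calc ((n:ℝ) + 1) * |w (a + ((n:ℝ) + 1)⁻¹) - w (b + ((n:ℝ) + 1)⁻¹) - (w a - w b)|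
        ≤ ((n:ℝ) + 1) * (M * |a - b| + M * |a - b|) := by
          refine mul_le_mul_of_nonneg_left ?_ (by positivity)
          refine le_trans (abs_sub _ _) ?_
          exact add_le_add h1 h2
      _ = (2 * M * ((n:ℝ) + 1)) * |a - b| := by ring
  have hsMVT : ∀ (n : ℕ) (y : ℝ), ∃ ζ, ζ ∈ Ioo y (y + ((n:ℝ) + 1)⁻¹) ∧ hs n y = deriv w ζ := by
    intro n y
    obtain ⟨ζ, hζ, hval⟩ := exists_hasDerivAt_eq_slope w (deriv w)
      (by linarith [hεpos n] : y < y + ((n:ℝ) + 1)⁻¹)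
      hwd.continuous.continuousOn (fun u _ => (hwd u).hasDerivAt)
    refine ⟨ζ, hζ, ?_⟩
    rw [hval, add_sub_cancel_left, hhs]
    simp only
    rw [div_eq_mul_inv, inv_inv]
    ring
  -- apply the abstract theorem
  have hkey := fun n : ℕ => abstract_solution T x₀ mc lam1 M (2 * M * ((n:ℝ) + 1))
    φ γf (hs n) hT.le hφc hφm hγc hγg (hsM n) (by positivity) (hsLip n)
  choose xs hxslip hxsbd hxseq using hkey
  set Λ : ℝ := mc * (2 * (lam1 * M * T)) with hΛdef
  have hΛ0 : 0 ≤ Λ := by rw [hΛdef]; positivity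
  set R : ℝ := Λ * T with hRdef
  have hR0 : 0 ≤ R := mul_nonneg hΛ0 hT.le
  have hxc : ∀ n, Continuous (xs n) := by
    intro n
    have hl : LipschitzWith (Real.toNNReal Λ) (xs n) := by
      apply LipschitzWith.of_dist_le_mul
      intro a b
      rw [Real.dist_eq, Real.dist_eq]
      exact le_trans (hxslip n a b)
        (mul_le_mul_of_nonneg_right (Real.le_coe_toNNReal Λ) (abs_nonneg _))
    exact hl.continuous
  set J : Set ℝ := Icc (x₀ - R) (x₀ + R) with hJdef
  have hmemJ : ∀ n (τ : ℝ), xs n τ ∈ J := by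
    intro n τ
    have hb := abs_le.1 (hxsbd n τ)
    rw [hJdef]
    exact ⟨by linarith [hb.1], by linarith [hb.2]⟩
  -- Arzelà–Ascoli
  set fb : ℕ → (Icc (0:ℝ) T →ᵇ ℝ) := fun n => BoundedContinuousFunction.ofNormedAddCommGroup
    (fun p => xs n p.1) ((hxc n).comp continuous_subtype_val) (|x₀| + R) (fun p => by
      rw [Real.norm_eq_abs]
      have hb := hxsbd n p.1
      calc |xs n p.1| = |x₀ + (xs n p.1 - x₀)| := by ring_nf
        _ ≤ |x₀| + |xs n p.1 - x₀| := abs_add_le _ _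
        _ ≤ |x₀| + R := add_le_add le_rfl hb) with hfbdef
  have hfbcoe : ∀ n (p : Icc (0:ℝ) T), fb n p = xs n p.1 := fun n p => rfl
  set AA : Set (Icc (0:ℝ) T →ᵇ ℝ) :=
    {f | (∀ p q, dist (f p) (f q) ≤ Λ * dist p q) ∧ ∀ p, f p ∈ J} with hAAdef
  have hfbA : ∀ n, fb n ∈ AA := by
    intro n
    constructor
    · intro p q
      rw [hfbcoe, hfbcoe, Real.dist_eq, Subtype.dist_eq, Real.dist_eq]
      exact hxslip n p.1 q.1
    · intro p
      rw [hfbcoe]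
      exact hmemJ n p.1
  have hAcomp : IsCompact (closure AA) := by
    apply BoundedContinuousFunction.arzela_ascoli J isCompact_Icc AA (fun f p hf => hf.2 p)
    apply Metric.equicontinuous_of_continuity_modulus (fun d => Λ * d)
    · have hc : Continuous fun d : ℝ => Λ * d := continuous_const.mul continuous_id
      have := hc.tendsto 0
      simpa using this
    · rintro p q ⟨f, hf⟩
      exact hf.1 p q
  obtain ⟨flim, hflimmem, ψ, hψmono, hψtend⟩ :=
    hAcomp.tendsto_subseq (fun n => subset_closure (hfbA n))
  set x : ℝ → ℝ := fun t => flim (projIcc 0 T hT.le t) with hxdef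
  have hxcont : Continuous x := flim.continuous.comp continuous_projIcc
  have hxt : ∀ t, ∀ ht : t ∈ Icc (0:ℝ) T, x t = flim ⟨t, ht⟩ := by
    intro t ht
    rw [hxdef]
    simp only
    rw [projIcc_of_mem hT.le ht]
  have hxJ : ∀ p, flim p ∈ J := by
    intro p
    have hJc : IsClosed J := isClosed_Icc
    rw [← hJc.closure_eq]
    apply Metric.mem_closure_iff.2
    intro ε hε
    obtain ⟨g, hgA, hdg⟩ := Metric.mem_closure_iff.1 hflimmem ε hε
    refine ⟨g p, hgA.2 p, ?_⟩
    exact lt_of_le_of_lt (BoundedContinuousFunction.dist_coe_le_dist p) hdg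
  have hunif : Tendsto (fun k => dist (fb (ψ k)) flim) atTop (𝓝 0) :=
    tendsto_iff_dist_tendsto_zero.1 hψtend
  refine ⟨x, hxcont.continuousOn, ?_⟩
  intro t ht
  -- kernel bound and continuity
  have hKc : Continuous fun τ => Kker ξ lam1 η r ρ t τ := by
    have hprim : Continuous fun b => ∫ s in (0:ℝ)..b, 1 / Ffun ξ lam1 η r ρ s :=
      continuous_primitive (fun a b => hφc.intervalIntegrable a b) 0
    exact hprim.comp (continuous_const.min continuous_id)
  have hKbd : ∀ τ ∈ Icc (0:ℝ) T, |Kker ξ lam1 η r ρ t τ| ≤ mc * T := by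
    intro τ hτ
    have hmin : min t τ ∈ Icc (0:ℝ) T :=
      ⟨le_min ht.1 hτ.1, le_trans (min_le_left _ _) ht.2⟩
    have hb : ∀ s ∈ Set.uIoc (0:ℝ) (min t τ), ‖1 / Ffun ξ lam1 η r ρ s‖ ≤ mc := by
      intro s hsm
      rw [Set.uIoc_of_le hmin.1] at hsm
      rw [Real.norm_eq_abs]
      exact hφm s ⟨le_of_lt hsm.1, le_trans hsm.2 hmin.2⟩
    have := intervalIntegral.norm_integral_le_of_norm_le_const hb
    rw [Real.norm_eq_abs, sub_zero, abs_of_nonneg hmin.1] at this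
    unfold Kker
    exact le_trans this (mul_le_mul_of_nonneg_left hmin.2 hmc0)
  set Kt : ℝ → ℝ := fun τ => Kker ξ lam1 η r ρ t τ * lam1 * Real.exp (-(r * τ)) with hKtdef
  have hKtc : Continuous Kt := by
    rw [hKtdef]
    exact (hKc.mul continuous_const).mul (Real.continuous_exp.comp
      ((continuous_const.mul continuous_id).neg))
  have hKtbd : ∀ τ ∈ Icc (0:ℝ) T, |Kt τ| ≤ mc * T * lam1 := by
    intro τ hτ
    rw [hKtdef]
    simp only
    rw [abs_mul, abs_mul]
    have h1 : |Real.exp (-(r * τ))| ≤ 1 := by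
      rw [abs_of_pos (Real.exp_pos _)]
      apply Real.exp_le_one_iff.2
      nlinarith [mul_nonneg hr.le hτ.1]
    have h2 : |Kker ξ lam1 η r ρ t τ| * |lam1| ≤ mc * T * lam1 := by
      rw [abs_of_pos hlam1]
      exact mul_le_mul_of_nonneg_right (hKbd τ hτ) hlam1.le
    calc |Kker ξ lam1 η r ρ t τ| * |lam1| * |Real.exp (-(r * τ))|
        ≤ |Kker ξ lam1 η r ρ t τ| * |lam1| * 1 :=
          mul_le_mul_of_nonneg_left h1 (by positivity)
      _ = |Kker ξ lam1 η r ρ t τ| * |lam1| := by ring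
      _ ≤ mc * T * lam1 := h2
  -- the approximate equations in the final form
  have heqk : ∀ k, xs (ψ k) t = x₀ + ∫ τ in (0:ℝ)..T, Kt τ * hs (ψ k) (xs (ψ k) τ) := by
    intro k
    rw [hxseq (ψ k) t ht]
    congr 1
    apply integral_congr
    intro τ _
    rw [hKtdef, hγdef, hφdef]
    show (∫ s in (0:ℝ)..min t τ, 1 / Ffun ξ lam1 η r ρ s) * (lam1 * Real.exp (-(r * τ))
      * hs (ψ k) (xs (ψ k) τ)) = Kker ξ lam1 η r ρ t τ * lam1 * Real.exp (-(r * τ))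
      * hs (ψ k) (xs (ψ k) τ)
    unfold Kker
    ring
  -- convergence of the left-hand sides
  have hlhs : Tendsto (fun k => xs (ψ k) t) atTop (𝓝 (x t)) := by
    rw [hxt t ht]
    apply tendsto_iff_dist_tendsto_zero.2
    apply squeeze_zero (fun k => dist_nonneg) (fun k => ?_) hunif
    show dist (fb (ψ k) (⟨t, ht⟩ : Icc (0:ℝ) T)) (flim ⟨t, ht⟩) ≤ dist (fb (ψ k)) flim
    exact BoundedContinuousFunction.dist_coe_le_dist _
  -- convergence of the integrals
  have hintc : ∀ k, Continuous fun τ => Kt τ * hs (ψ k) (xs (ψ k) τ) := by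
    intro k
    refine hKtc.mul ?_
    have hlip : Continuous (hs (ψ k)) := by
      have : LipschitzWith (Real.toNNReal (2 * M * ((ψ k : ℝ) + 1))) (hs (ψ k)) := by
        apply LipschitzWith.of_dist_le_mul
        intro a b
        rw [Real.dist_eq, Real.dist_eq]
        exact le_trans (hsLip (ψ k) a b)
          (mul_le_mul_of_nonneg_right (Real.le_coe_toNNReal _) (abs_nonneg _))
      exact this.continuous
    exact hlip.comp (hxc (ψ k))
  have hlimc : Continuous fun τ => Kt τ * deriv w (x τ) :=
    hKtc.mul (hw'c.comp hxcont)
  have hrhs : Tendsto (fun k => ∫ τ in (0:ℝ)..T, Kt τ * hs (ψ k) (xs (ψ k) τ)) atTop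
      (𝓝 (∫ τ in (0:ℝ)..T, Kt τ * deriv w (x τ))) := by
    rw [Metric.tendsto_atTop]
    intro ε hε
    set C1 : ℝ := mc * T * lam1 with hC1def
    have hC10 : 0 ≤ C1 := by rw [hC1def]; positivity
    set ε' : ℝ := ε / (2 * (C1 * T + 1)) with hε'def
    have hε'0 : 0 < ε' := by rw [hε'def]; positivity
    -- uniform continuity of deriv w on a compact neighborhood of J
    set J1 : Set ℝ := Icc (x₀ - R - 1) (x₀ + R + 1) with hJ1def
    have hJsub : J ⊆ J1 := by
      rw [hJdef, hJ1def]
      apply Icc_subset_Icc <;> linarith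
    have hUC := (isCompact_Icc (a := x₀ - R - 1) (b := x₀ + R + 1)).uniformContinuousOn_of_continuous
      hw'c.continuousOn
    obtain ⟨δ, hδ0, hδ⟩ := Metric.uniformContinuousOn_iff.1 hUC ε' hε'0
    set δ' : ℝ := min δ 1 with hδ'def
    have hδ'0 : 0 < δ' := lt_min hδ0 one_pos
    have hδ'δ : δ' ≤ δ := min_le_left _ _
    have hδ'1 : δ' ≤ 1 := min_le_right _ _
    obtain ⟨N₁, hN₁⟩ := exists_nat_ge (δ'⁻¹)
    have hev : ∀ᶠ k in atTop, dist (fb (ψ k)) flim < δ' :=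
      hunif.eventually_lt_const hδ'0
    obtain ⟨N₂, hN₂⟩ := eventually_atTop.1 hev
    refine ⟨max N₁ N₂, fun k hk => ?_⟩
    have hkN₁ : (N₁ : ℕ) ≤ k := le_trans (le_max_left _ _) hk
    have hkN₂ : (N₂ : ℕ) ≤ k := le_trans (le_max_right _ _) hk
    have hψk : (N₁ : ℝ) ≤ (ψ k : ℝ) := by
      exact_mod_cast le_trans hkN₁ hψmono.le_apply
    have hεψ : ((ψ k : ℝ) + 1)⁻¹ ≤ δ' := by
      rw [inv_le_comm₀ (by positivity) hδ'0]
      calc δ'⁻¹ ≤ (N₁ : ℝ) := hN₁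
        _ ≤ (ψ k : ℝ) + 1 := by linarith
    have hdk : dist (fb (ψ k)) flim < δ' := hN₂ k hkN₂
    -- pointwise bound on the integrand difference
    have hb : ∀ τ ∈ Set.uIoc (0:ℝ) T,
        ‖Kt τ * hs (ψ k) (xs (ψ k) τ) - Kt τ * deriv w (x τ)‖ ≤ C1 * (2 * ε') := by
      intro τ hτ
      rw [Set.uIoc_of_le hT.le] at hτ
      have hτI : τ ∈ Icc (0:ℝ) T := ⟨le_of_lt hτ.1, hτ.2⟩
      set y : ℝ := xs (ψ k) τ with hydef
      have hyJ : y ∈ J := hmemJ (ψ k) τ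
      have hxτJ : x τ ∈ J := by
        rw [hxt τ hτI]
        exact hxJ _
      -- (a) |hs (ψ k) y - deriv w y| ≤ ε'
      obtain ⟨ζ, hζmem, hζval⟩ := hsMVT (ψ k) y
      have hζJ1 : ζ ∈ J1 := by
        rw [hJ1def]
        have h1 := hyJ.1
        have h2 := hyJ.2
        rw [hJdef] at hyJ
        constructor
        · have := hζmem.1
          have := hyJ.1
          linarith
        · have := hζmem.2
          have := hyJ.2
          have := hεψ
          have := hδ'1
          linarith
      have hyJ1 : y ∈ J1 := hJsub hyJ
      have ha : |hs (ψ k) y - deriv w y| ≤ ε' := by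
        rw [hζval]
        have hd : dist ζ y < δ := by
          rw [Real.dist_eq]
          rw [abs_of_pos (by linarith [hζmem.1] : 0 < ζ - y)]
          have := hζmem.2
          have := hεψ
          linarith [hζmem.1]
        have := hδ ζ hζJ1 y hyJ1 hd
        rw [Real.dist_eq] at this
        exact le_of_lt this
      -- (b) |deriv w y - deriv w (x τ)| ≤ ε'
      have hbb : |deriv w y - deriv w (x τ)| ≤ ε' := by
        have hdyx : dist y (x τ) < δ := by
          rw [Real.dist_eq]
          have h1 : y = fb (ψ k) ⟨τ, hτI⟩ := rfl
          have h2 : x τ = flim ⟨τ, hτI⟩ := hxt τ hτI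
          rw [h1, h2]
          calc |fb (ψ k) ⟨τ, hτI⟩ - flim ⟨τ, hτI⟩|
              ≤ dist (fb (ψ k)) flim := by
                rw [← Real.dist_eq]
                exact BoundedContinuousFunction.dist_coe_le_dist _
            _ < δ' := hdk
            _ ≤ δ := hδ'δ
        have := hδ y hyJ1 (x τ) (hJsub hxτJ) hdyx
        rw [Real.dist_eq] at this
        exact le_of_lt this
      -- combine
      rw [← mul_sub, Real.norm_eq_abs, abs_mul]
      have htot : |hs (ψ k) y - deriv w (x τ)| ≤ 2 * ε' := by
        calc |hs (ψ k) y - deriv w (x τ)|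
            = |(hs (ψ k) y - deriv w y) + (deriv w y - deriv w (x τ))| := by ring_nf
          _ ≤ |hs (ψ k) y - deriv w y| + |deriv w y - deriv w (x τ)| := abs_add_le _ _
          _ ≤ 2 * ε' := by linarith
      exact mul_le_mul (hKtbd τ hτI) htot (abs_nonneg _) hC10
    -- conclude
    rw [Real.dist_eq, ← intervalIntegral.integral_sub ((hintc k).intervalIntegrable 0 T)
      (hlimc.intervalIntegrable 0 T)]
    have := intervalIntegral.norm_integral_le_of_norm_le_const hb
    rw [Real.norm_eq_abs, sub_zero, abs_of_nonneg hT.le] at this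
    refine lt_of_le_of_lt this ?_
    rw [hε'def]
    rw [div_eq_mul_inv]
    have hpos : (0:ℝ) < 2 * (C1 * T + 1) := by positivity
    rw [show C1 * (2 * (ε * (2 * (C1 * T + 1))⁻¹)) * T
      = ε * ((2 * (C1 * T)) * (2 * (C1 * T + 1))⁻¹) by ring]
    have hlt : (2 * (C1 * T)) * (2 * (C1 * T + 1))⁻¹ < 1 := by
      rw [← div_eq_mul_inv, div_lt_one hpos]
      nlinarith [mul_nonneg hC10 hT.le]
    nlinarith [hlt, hε]
  have hrhs' : Tendsto (fun k => x₀ + ∫ τ in (0:ℝ)..T, Kt τ * hs (ψ k) (xs (ψ k) τ)) atTop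
      (𝓝 (x₀ + ∫ τ in (0:ℝ)..T, Kt τ * deriv w (x τ))) := hrhs.const_add x₀
  have hfinal := tendsto_nhds_unique (hlhs.congr heqk) hrhs'
  rw [hfinal]

end Main
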